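/- The identity ∏_{m=1}^{∞} 1/(1 + q^m) = 1 + ∑_{l=1}^{∞} (-1)^l q^{l^2} / ∏_{j=1}^{l} (1 - q^{2j}) holds as formal power series in q. -/

import Mathlib

open PowerSeries Finset

namespace BosonicAux


noncomputable def DD (l : ℕ) : PowerSeries ℚ :=
  ∏ j ∈ Finset.range l, (1 - (X : PowerSeries ℚ) ^ (2*(j+1)))

noncomputable def gb : ℕ → ℕ → PowerSeries ℚ
  | 0, 0 => 1
  | 0, _+1 => 0
  | _+1, 0 => 1
  | N+1, l+1 => gb N (l+1) + (X : PowerSeries ℚ)^(2*(N-l)) * gb N l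

lemma gb_eq_zero : ∀ {N l : ℕ}, N < l → gb N l = 0 := by
  intro N
  induction N with
  | zero => intro l hl; match l, hl with | l+1, _ => rfl
  | succ N ih =>
    intro l hl
    match l, hl with
    | l+1, hl =>
      show gb N (l+1) + (X : PowerSeries ℚ)^(2*(N-l)) * gb N l = 0
      rw [ih (by omega), ih (by omega), mul_zero, add_zero]

lemma gb_diag : ∀ N, gb N N = 1 := by
  intro N
  induction N with
  | zero => rfl
  | succ N ih =>
    show gb N (N+1) + (X : PowerSeries ℚ)^(2*(N-N)) * gb N N = 1
    rw [gb_eq_zero (by omega), ih, Nat.sub_self, zero_add, mul_one, pow_zero]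

lemma DD_succ (l : ℕ) : DD (l+1) = DD l * (1 - (X : PowerSeries ℚ)^(2*(l+1))) :=
  Finset.prod_range_succ _ _

lemma claimA : ∀ N : ℕ, ∀ l ≤ N, gb N l * (DD l * DD (N - l)) = DD N := by
  intro N
  induction N with
  | zero =>
    intro l hl
    interval_cases l
    show (1 : PowerSeries ℚ) * (DD 0 * DD 0) = DD 0
    simp [DD]
  | succ N ih =>
    intro l hl
    match l with
    | 0 =>
      show (1 : PowerSeries ℚ) * (DD 0 * DD (N+1)) = DD (N+1)
      simp [DD]
    | l+1 =>
      rcases Nat.lt_or_ge l N with hlN | hlN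
      · obtain ⟨k, hk⟩ : ∃ k, N - l = k + 1 := ⟨N - l - 1, by omega⟩
        have hN : N = l + k + 1 := by omega
        subst hN
        have h1 : l + k + 1 - (l + 1) = k := by omega
        have h2 : l + k + 1 + 1 - (l + 1) = k + 1 := by omega
        have e1 := ih (l+1) (by omega)
        have e2 := ih l (by omega)
        rw [h1] at e1
        rw [hk] at e2
        rw [h2]
        show (gb (l+k+1) (l+1) + (X : PowerSeries ℚ)^(2*((l+k+1)-l)) * gb (l+k+1) l) *
          (DD (l+1) * DD (k+1)) = DD (l+k+1+1)
        have h3 : (l+k+1) - l = k+1 := by omega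
        rw [h3, DD_succ (l+k+1), DD_succ k, DD_succ l]
        rw [DD_succ l] at e1
        rw [DD_succ k] at e2
        linear_combination (1 - (X : PowerSeries ℚ)^(2*(k+1))) * e1 +
          (X : PowerSeries ℚ)^(2*(k+1)) * (1 - (X : PowerSeries ℚ)^(2*(l+1))) * e2
      · have hNl : N = l := by omega
        subst hNl
        show (gb N (N+1) + (X : PowerSeries ℚ)^(2*(N-N)) * gb N N) * (DD (N+1) * DD (N+1-(N+1))) = DD (N+1)
        rw [gb_eq_zero (by omega), gb_diag, Nat.sub_self, Nat.sub_self, pow_zero]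
        show ((0 : PowerSeries ℚ) + 1*1) * (DD (N+1) * DD 0) = DD (N+1)
        simp [DD]


lemma gb_zero_r : ∀ N, gb N 0 = 1 := by intro N; cases N <;> rfl

lemma claimB : ∀ N : ℕ, ∑ l ∈ range (N+1), (-1 : PowerSeries ℚ)^l * X^(l^2) * gb N l
    = ∏ j ∈ range N, (1 - (X : PowerSeries ℚ)^(2*j+1)) := by
  intro N
  induction N with
  | zero => simp [gb]
  | succ N ih =>
    rw [Finset.sum_range_succ']
    have expand : ∀ k ∈ range (N+1),
        (-1 : PowerSeries ℚ)^(k+1) * X^((k+1)^2) * gb (N+1) (k+1)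
          = -((-1)^k * X^((k+1)^2) * gb N (k+1))
            + -((X : PowerSeries ℚ)^(2*N+1) * ((-1)^k * X^(k^2) * gb N k)) := by
      intro k hk
      simp only [Finset.mem_range] at hk
      obtain ⟨d, rfl⟩ : ∃ d, N = k + d := ⟨N - k, by omega⟩
      show (-1 : PowerSeries ℚ)^(k+1) * X^((k+1)^2) *
        (gb (k+d) (k+1) + (X : PowerSeries ℚ)^(2*((k+d)-k)) * gb (k+d) k) = _
      rw [Nat.add_sub_cancel_left]
      ring
    rw [Finset.sum_congr rfl expand, Finset.sum_add_distrib]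
    have h1 : ∑ k ∈ range (N+1), -((-1 : PowerSeries ℚ)^k * X^((k+1)^2) * gb N (k+1))
        = (∏ j ∈ range N, (1 - (X : PowerSeries ℚ)^(2*j+1))) - 1 := by
      have e1 : ∑ k ∈ range (N+1), -((-1 : PowerSeries ℚ)^k * X^((k+1)^2) * gb N (k+1))
          = ∑ k ∈ range (N+1), (fun l => (-1 : PowerSeries ℚ)^l * X^(l^2) * gb N l) (k+1) := by
        refine Finset.sum_congr rfl fun k _ => ?_
        show -((-1 : PowerSeries ℚ)^k * X^((k+1)^2) * gb N (k+1))
          = (-1 : PowerSeries ℚ)^(k+1) * X^((k+1)^2) * gb N (k+1)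
        ring
      rw [e1]
      have h2 := Finset.sum_range_succ' (fun l => (-1 : PowerSeries ℚ)^l * X^(l^2) * gb N l) (N+1)
      have h3 : ∑ l ∈ range (N+1+1), (-1 : PowerSeries ℚ)^l * X^(l^2) * gb N l
          = ∏ j ∈ range N, (1 - (X : PowerSeries ℚ)^(2*j+1)) := by
        rw [Finset.sum_range_succ, gb_eq_zero (by omega), mul_zero, add_zero, ih]
      have hf0 : (fun l => (-1 : PowerSeries ℚ)^l * X^(l^2) * gb N l) 0 = 1 := by
        simp [gb_zero_r]
      linear_combination h3 - h2 - hf0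
    have h2 : ∑ k ∈ range (N+1), -((X : PowerSeries ℚ)^(2*N+1) * ((-1 : PowerSeries ℚ)^k * X^(k^2) * gb N k))
        = -((X : PowerSeries ℚ)^(2*N+1) * ∏ j ∈ range N, (1 - (X : PowerSeries ℚ)^(2*j+1))) := by
      rw [Finset.sum_neg_distrib, ← Finset.mul_sum, ih]
    rw [h1, h2, Finset.prod_range_succ]
    have hf0' : (-1 : PowerSeries ℚ)^0 * X^(0^2) * gb (N+1) 0 = 1 := by
      simp [gb_zero_r]
    rw [hf0']
    ring


lemma coeff_eq_of_dvd {n : ℕ} {a b : PowerSeries ℚ}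
    (h : (X : PowerSeries ℚ)^(n+1) ∣ a - b) :
    PowerSeries.coeff (R := ℚ) n a = PowerSeries.coeff (R := ℚ) n b := by
  have h2 := PowerSeries.X_pow_dvd_iff.mp h n (lt_add_one n)
  rw [map_sub] at h2
  exact sub_eq_zero.mp h2

lemma mul_sub_one_dvd {K : ℕ} {f g : PowerSeries ℚ}
    (hf : (X : PowerSeries ℚ)^K ∣ f - 1) (hg : (X : PowerSeries ℚ)^K ∣ g - 1) :
    (X : PowerSeries ℚ)^K ∣ f * g - 1 := by
  have h : f * g - 1 = f * (g - 1) + (f - 1) := by ring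
  rw [h]
  exact dvd_add (Dvd.dvd.mul_left hg f) hf

lemma prod_sub_one_dvd {K : ℕ} {s : Finset ℕ} {f : ℕ → PowerSeries ℚ}
    (h : ∀ i ∈ s, (X : PowerSeries ℚ)^K ∣ f i - 1) :
    (X : PowerSeries ℚ)^K ∣ (∏ i ∈ s, f i) - 1 := by
  induction s using Finset.cons_induction with
  | empty => simp
  | cons a s ha ih =>
    rw [Finset.prod_cons]
    exact mul_sub_one_dvd (h a (Finset.mem_cons_self a s))
      (ih fun i hi => h i (Finset.mem_cons_of_mem hi))

lemma cc_one_sub (k : ℕ) (hk : k ≠ 0) : constantCoeff (R := ℚ) (1 - (X : PowerSeries ℚ)^k) = 1 := by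
  rw [map_sub, map_one, map_pow, constantCoeff_X, zero_pow hk, sub_zero]

lemma cc_one_add (k : ℕ) (hk : k ≠ 0) : constantCoeff (R := ℚ) (1 + (X : PowerSeries ℚ)^k) = 1 := by
  rw [map_add, map_one, map_pow, constantCoeff_X, zero_pow hk, add_zero]

lemma one_add_mul_inv (k : ℕ) :
    (1 + (X : PowerSeries ℚ)^(k+1)) * (1 + (X : PowerSeries ℚ)^(k+1))⁻¹ = 1 :=
  PowerSeries.mul_inv_cancel _ (by rw [cc_one_add (k+1) (by omega)]; norm_num)

lemma cc_DD (l : ℕ) : constantCoeff (R := ℚ) (DD l) = 1 := by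
  rw [DD, map_prod]
  refine Finset.prod_eq_one fun j _ => cc_one_sub _ (by omega)

lemma DD_mul_inv (l : ℕ) : DD l * (DD l)⁻¹ = 1 :=
  PowerSeries.mul_inv_cancel _ (by rw [cc_DD]; norm_num)

lemma DD_ne_zero (l : ℕ) : DD l ≠ 0 := by
  intro h
  have := cc_DD l
  rw [h, map_zero] at this
  norm_num at this

lemma inv_one_add_sub_one (k : ℕ) :
    (X : PowerSeries ℚ)^(k+1) ∣ (1 + (X : PowerSeries ℚ)^(k+1))⁻¹ - 1 := by
  have h : (1 + (X : PowerSeries ℚ)^(k+1))⁻¹ - 1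
      = -((1 + (X : PowerSeries ℚ)^(k+1))⁻¹ * (X : PowerSeries ℚ)^(k+1)) := by
    linear_combination one_add_mul_inv k
  rw [h, dvd_neg]
  exact dvd_mul_left _ _

lemma prod_range_two_mul (f : ℕ → PowerSeries ℚ) :
    ∀ K, ∏ m ∈ range (2*K), f m = ∏ j ∈ range K, (f (2*j) * f (2*j+1)) := by
  intro K
  induction K with
  | zero => simp
  | succ K ih =>
    rw [show 2*(K+1) = 2*K+1+1 from rfl, prod_range_succ, prod_range_succ, ih,
      prod_range_succ, mul_assoc]

end BosonicAux

open BosonicAux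

/-- Bosonic extension of Euler's pentagonal number theorem:
`∏_{m=1}^∞ 1/(1+q^m) = 1 + ∑_{l=1}^∞ (-1)^l q^{l²} / ∏_{j=1}^{l} (1-q^{2j})`,
stated coefficientwise (truncating the product and the sum, which does not affect
the coefficient of `q^n`). -/
theorem bosonic_pentagonal :
    ∀ n : ℕ,
      (PowerSeries.coeff (R := ℚ) n) (∏ m ∈ Finset.range (n + 1), (1 + (X : PowerSeries ℚ) ^ (m + 1))⁻¹) =
      (PowerSeries.coeff (R := ℚ) n) (1 + ∑ l ∈ Finset.range (n + 1),
        ((-1 : PowerSeries ℚ) ^ (l + 1) * (X : PowerSeries ℚ) ^ ((l + 1) ^ 2) *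
          (∏ j ∈ Finset.range (l + 1), (1 - (X : PowerSeries ℚ) ^ (2 * (j + 1))))⁻¹)) := by
  intro n
  -- Step A: rewrite the RHS as a single sum `T`
  have hRHS : (1 + ∑ l ∈ Finset.range (n + 1),
        ((-1 : PowerSeries ℚ) ^ (l + 1) * (X : PowerSeries ℚ) ^ ((l + 1) ^ 2) *
          (∏ j ∈ Finset.range (l + 1), (1 - (X : PowerSeries ℚ) ^ (2 * (j + 1))))⁻¹))
      = ∑ l ∈ range (n+2), (-1 : PowerSeries ℚ)^l * X^(l^2) * (DD l)⁻¹ := by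
    rw [Finset.sum_range_succ' (fun l => (-1 : PowerSeries ℚ)^l * X^(l^2) * (DD l)⁻¹) (n+1)]
    rw [show ((-1 : PowerSeries ℚ)^0 * X^(0^2) * (DD 0)⁻¹) = 1 by simp [DD], add_comm]
    congr 1
  -- Step B : `X^(n+1) ∣ T - Q`
  have hTQ : (X : PowerSeries ℚ)^(n+1) ∣
      (∑ l ∈ range (n+2), (-1 : PowerSeries ℚ)^l * X^(l^2) * (DD l)⁻¹)
        - ∏ j ∈ range (n+1), (1 - (X : PowerSeries ℚ)^(2*j+1)) := by
    rw [← claimB (n+1), ← Finset.sum_sub_distrib]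
    refine Finset.dvd_sum fun l hl => ?_
    simp only [Finset.mem_range] at hl
    have hln : l ≤ n + 1 := by omega
    set m := n + 1 - l with hm
    set W := ∏ j ∈ Ico m (n+1), (1 - (X : PowerSeries ℚ)^(2*(j+1))) with hWdef
    have hsplit : DD m * W = DD (n+1) := by
      rw [hWdef, DD, DD]
      simp only [Finset.range_eq_Ico]
      exact Finset.prod_Ico_consecutive _ (Nat.zero_le m) (by omega)
    have hA := claimA (n+1) l hln
    have h2 : gb (n+1) l * DD l = W := by
      apply mul_right_cancel₀ (DD_ne_zero m)
      linear_combination hA - hsplit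
    have hgb : gb (n+1) l = (DD l)⁻¹ * W := by
      linear_combination (DD l)⁻¹ * h2 - gb (n+1) l * DD_mul_inv l
    have hWd : (X : PowerSeries ℚ)^(2*m+2) ∣ W - 1 := by
      refine prod_sub_one_dvd fun j hj => ?_
      simp only [Finset.mem_Ico] at hj
      rw [show (1 - (X : PowerSeries ℚ)^(2*(j+1))) - 1 = -((X : PowerSeries ℚ)^(2*(j+1))) from by ring,
        dvd_neg]
      exact pow_dvd_pow _ (by omega)
    have hterm : (-1 : PowerSeries ℚ)^l * X^(l^2) * (DD l)⁻¹
          - (-1 : PowerSeries ℚ)^l * X^(l^2) * gb (n+1) l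
        = -((-1 : PowerSeries ℚ)^l * (DD l)⁻¹ * (X^(l^2) * (W - 1))) := by
      rw [hgb]; ring
    rw [hterm, dvd_neg]
    have h5 : l ≤ l ^ 2 + 2 := by
      rcases Nat.eq_zero_or_pos l with h | h
      · simp [h]
      · have h6 : l * 1 ≤ l * l := Nat.mul_le_mul_left l h
        rw [mul_one] at h6
        rw [pow_two]
        omega
    have hle : n + 1 ≤ l^2 + (2*m+2) := by
      generalize hsq : l^2 = s at h5 ⊢
      omega
    refine Dvd.dvd.mul_left ?_ _
    exact dvd_trans (pow_dvd_pow _ hle) (by rw [pow_add]; exact mul_dvd_mul_left _ hWd)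
  -- Step C : `X^(n+1) ∣ LHS - Q`
  have hPL : (∏ m ∈ range (2*n+2), (1 + (X : PowerSeries ℚ)^(m+1)))
      * (∏ m ∈ range (2*n+2), (1 + (X : PowerSeries ℚ)^(m+1))⁻¹) = 1 := by
    rw [← Finset.prod_mul_distrib]
    exact Finset.prod_eq_one fun m _ => one_add_mul_inv m
  have hLL : (X : PowerSeries ℚ)^(n+1) ∣
      (∏ m ∈ range (2*n+2), (1 + (X : PowerSeries ℚ)^(m+1))⁻¹)
        - ∏ m ∈ range (n+1), (1 + (X : PowerSeries ℚ)^(m+1))⁻¹ := by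
    have hsp : (∏ m ∈ range (n+1), (1 + (X : PowerSeries ℚ)^(m+1))⁻¹)
        * (∏ m ∈ Ico (n+1) (2*n+2), (1 + (X : PowerSeries ℚ)^(m+1))⁻¹)
        = ∏ m ∈ range (2*n+2), (1 + (X : PowerSeries ℚ)^(m+1))⁻¹ := by
      simp only [Finset.range_eq_Ico]
      exact Finset.prod_Ico_consecutive _ (Nat.zero_le _) (by omega)
    have hWx : (X : PowerSeries ℚ)^(n+1) ∣
        (∏ m ∈ Ico (n+1) (2*n+2), (1 + (X : PowerSeries ℚ)^(m+1))⁻¹) - 1 := by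
      refine prod_sub_one_dvd fun m hm => ?_
      simp only [Finset.mem_Ico] at hm
      exact dvd_trans (pow_dvd_pow _ (by omega)) (inv_one_add_sub_one m)
    rw [← hsp, show (∏ m ∈ range (n+1), (1 + (X : PowerSeries ℚ)^(m+1))⁻¹)
        * (∏ m ∈ Ico (n+1) (2*n+2), (1 + (X : PowerSeries ℚ)^(m+1))⁻¹)
        - (∏ m ∈ range (n+1), (1 + (X : PowerSeries ℚ)^(m+1))⁻¹)
      = (∏ m ∈ range (n+1), (1 + (X : PowerSeries ℚ)^(m+1))⁻¹)
        * ((∏ m ∈ Ico (n+1) (2*n+2), (1 + (X : PowerSeries ℚ)^(m+1))⁻¹) - 1) from by ring]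
    exact Dvd.dvd.mul_left hWx _
  have hG : ∏ m ∈ range (2*n+2), (1 - (X : PowerSeries ℚ)^(2*(m+1)))
      = (∏ m ∈ range (2*n+2), (1 + (X : PowerSeries ℚ)^(m+1)))
        * ((∏ j ∈ range (n+1), (1 - (X : PowerSeries ℚ)^(2*j+1))) * DD (n+1)) := by
    rw [Finset.prod_congr rfl fun m _ =>
      show (1 : PowerSeries ℚ) - X^(2*(m+1)) = (1 + X^(m+1)) * (1 - X^(m+1)) from by ring]
    rw [Finset.prod_mul_distrib]
    congr 1
    rw [show (2*n+2) = 2*(n+1) from by ring,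
      prod_range_two_mul (fun m => (1 : PowerSeries ℚ) - X^(m+1)) (n+1), DD,
      ← Finset.prod_mul_distrib]
    refine Finset.prod_congr rfl fun j _ => ?_
    rw [show 2*j+1+1 = 2*(j+1) from by ring]
  have hsplit2 : DD (n+1) * (∏ j ∈ Ico (n+1) (2*n+2), (1 - (X : PowerSeries ℚ)^(2*(j+1))))
      = ∏ m ∈ range (2*n+2), (1 - (X : PowerSeries ℚ)^(2*(m+1))) := by
    rw [DD]
    simp only [Finset.range_eq_Ico]
    exact Finset.prod_Ico_consecutive _ (Nat.zero_le _) (by omega)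
  have hPQ : (∏ m ∈ range (2*n+2), (1 + (X : PowerSeries ℚ)^(m+1)))
      * (∏ j ∈ range (n+1), (1 - (X : PowerSeries ℚ)^(2*j+1)))
      = ∏ j ∈ Ico (n+1) (2*n+2), (1 - (X : PowerSeries ℚ)^(2*(j+1))) := by
    apply mul_right_cancel₀ (DD_ne_zero (n+1))
    linear_combination -hG - hsplit2
  have hV : (X : PowerSeries ℚ)^(n+1) ∣
      (∏ j ∈ Ico (n+1) (2*n+2), (1 - (X : PowerSeries ℚ)^(2*(j+1)))) - 1 := by
    refine prod_sub_one_dvd fun j hj => ?_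
    simp only [Finset.mem_Ico] at hj
    rw [show (1 - (X : PowerSeries ℚ)^(2*(j+1))) - 1 = -((X : PowerSeries ℚ)^(2*(j+1))) from by ring,
      dvd_neg]
    exact pow_dvd_pow _ (by omega)
  have hP'cc : constantCoeff (R := ℚ) (∏ m ∈ range (2*n+2), (1 + (X : PowerSeries ℚ)^(m+1))) ≠ 0 := by
    rw [map_prod, Finset.prod_eq_one fun m _ => cc_one_add (m+1) (by omega)]
    norm_num
  have hPinv : (∏ m ∈ range (2*n+2), (1 + (X : PowerSeries ℚ)^(m+1)))⁻¹
      * (∏ m ∈ range (2*n+2), (1 + (X : PowerSeries ℚ)^(m+1))) = 1 := by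
    rw [mul_comm]
    exact PowerSeries.mul_inv_cancel _ hP'cc
  have hQL : (X : PowerSeries ℚ)^(n+1) ∣
      (∏ j ∈ range (n+1), (1 - (X : PowerSeries ℚ)^(2*j+1)))
        - ∏ m ∈ range (2*n+2), (1 + (X : PowerSeries ℚ)^(m+1))⁻¹ := by
    have h6 : (∏ m ∈ range (2*n+2), (1 + (X : PowerSeries ℚ)^(m+1)))
        * ((∏ j ∈ range (n+1), (1 - (X : PowerSeries ℚ)^(2*j+1)))
          - ∏ m ∈ range (2*n+2), (1 + (X : PowerSeries ℚ)^(m+1))⁻¹)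
        = (∏ j ∈ Ico (n+1) (2*n+2), (1 - (X : PowerSeries ℚ)^(2*(j+1)))) - 1 := by
      linear_combination hPQ - hPL
    have h7 : (∏ j ∈ range (n+1), (1 - (X : PowerSeries ℚ)^(2*j+1)))
          - ∏ m ∈ range (2*n+2), (1 + (X : PowerSeries ℚ)^(m+1))⁻¹
        = (∏ m ∈ range (2*n+2), (1 + (X : PowerSeries ℚ)^(m+1)))⁻¹
          * ((∏ j ∈ Ico (n+1) (2*n+2), (1 - (X : PowerSeries ℚ)^(2*(j+1)))) - 1) := by
      linear_combination (∏ m ∈ range (2*n+2), (1 + (X : PowerSeries ℚ)^(m+1)))⁻¹ * h6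
        - ((∏ j ∈ range (n+1), (1 - (X : PowerSeries ℚ)^(2*j+1)))
          - ∏ m ∈ range (2*n+2), (1 + (X : PowerSeries ℚ)^(m+1))⁻¹) * hPinv
    rw [h7]
    exact Dvd.dvd.mul_left hV _
  -- combine everything
  rw [hRHS]
  apply coeff_eq_of_dvd
  have h8 : (∏ m ∈ range (n+1), (1 + (X : PowerSeries ℚ)^(m+1))⁻¹)
        - (∑ l ∈ range (n+2), (-1 : PowerSeries ℚ)^l * X^(l^2) * (DD l)⁻¹)
      = -(((∏ m ∈ range (2*n+2), (1 + (X : PowerSeries ℚ)^(m+1))⁻¹)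
            - ∏ m ∈ range (n+1), (1 + (X : PowerSeries ℚ)^(m+1))⁻¹)
          + ((∏ j ∈ range (n+1), (1 - (X : PowerSeries ℚ)^(2*j+1)))
            - ∏ m ∈ range (2*n+2), (1 + (X : PowerSeries ℚ)^(m+1))⁻¹))
        - ((∑ l ∈ range (n+2), (-1 : PowerSeries ℚ)^l * X^(l^2) * (DD l)⁻¹)
            - ∏ j ∈ range (n+1), (1 - (X : PowerSeries ℚ)^(2*j+1))) := by
    ring
  rw [h8]
  exact dvd_sub (dvd_neg.mpr (dvd_add hLL hQL)) hTQ
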